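/- Let B*_n be the number of non-overlapping set partitions of [n] and B̃*_n the number of non-overlapping set partitions of [n] with no singletons (B*_0 = B̃*_0 = 1, counting the empty partition). Then for all n ≥ 0: B*_n = Σ_{j=0}^{n} C(n,j)·B̃*_{n−j}, and B̃*_{n+1} = Σ_{j=0}^{n−1} B̃*_j·B*_{n−1−j}. -/

import Mathlib

open Finset

/-- Blocks `α`, `β` overlap if `min α < min β < max α < max β`. -/
def Overlaps {n : ℕ} (α β : Finset (Fin n)) : Prop :=
  ∃ hα : α.Nonempty, ∃ hβ : β.Nonempty,
    α.min' hα < β.min' hβ ∧ β.min' hβ < α.max' hα ∧ α.max' hα < β.max' hβ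

/-- A set partition is non-overlapping if no two of its blocks overlap. -/
def IsNonOverlapping {n : ℕ} (π : Finpartition (Finset.univ : Finset (Fin n))) : Prop :=
  ∀ α ∈ π.parts, ∀ β ∈ π.parts, ¬ Overlaps α β

/-- The Bessel number `B*_n`: the number of non-overlapping set partitions of `[n]`. -/
noncomputable def besselB (n : ℕ) : ℕ :=
  Nat.card {π : Finpartition (Finset.univ : Finset (Fin n)) // IsNonOverlapping π}

/-- The 2-associated Bessel number `B̃*_n`: the number of non-overlapping set
partitions of `[n]` with no singletons. -/
noncomputable def besselBt (n : ℕ) : ℕ :=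
  Nat.card {π : Finpartition (Finset.univ : Finset (Fin n)) //
    IsNonOverlapping π ∧ ∀ β ∈ π.parts, 2 ≤ β.card}

namespace BesselAux

/-- Overlap for finsets of naturals. -/
def Ovl (B C : Finset ℕ) : Prop :=
  ∃ hB : B.Nonempty, ∃ hC : C.Nonempty,
    B.min' hB < C.min' hC ∧ C.min' hC < B.max' hB ∧ B.max' hB < C.max' hC

/-- Non-overlapping partition of a finset of naturals. -/
structure NOP (t : Finset ℕ) (P : Finset (Finset ℕ)) : Prop where
  nonempty : ∀ B ∈ P, B.Nonempty
  disj : ∀ B ∈ P, ∀ C ∈ P, B ≠ C → Disjoint B C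
  sub : ∀ B ∈ P, B ⊆ t
  cover : ∀ x ∈ t, ∃ B ∈ P, x ∈ B
  novl : ∀ B ∈ P, ∀ C ∈ P, ¬ Ovl B C

def NOP2 (t : Finset ℕ) (P : Finset (Finset ℕ)) : Prop :=
  NOP t P ∧ ∀ B ∈ P, 2 ≤ B.card

noncomputable def fB (t : Finset ℕ) : ℕ := Nat.card {P // NOP t P}
noncomputable def fBt (t : Finset ℕ) : ℕ := Nat.card {P // NOP2 t P}

lemma nop_subset_powerset {t : Finset ℕ} {P : Finset (Finset ℕ)} (h : NOP t P) :
    P ∈ t.powerset.powerset := by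
  simp only [mem_powerset]
  intro B hB
  simp only [mem_powerset]
  exact h.sub B hB

instance fin1 (t : Finset ℕ) : Finite {P // NOP t P} := by
  have : {P | NOP t P} ⊆ ↑t.powerset.powerset := fun P hP =>
    mem_coe.2 (nop_subset_powerset hP)
  exact (Set.Finite.subset t.powerset.powerset.finite_toSet this).to_subtype

instance fin2 (t : Finset ℕ) : Finite {P // NOP2 t P} := by
  have : {P | NOP2 t P} ⊆ ↑t.powerset.powerset := fun P hP =>
    mem_coe.2 (nop_subset_powerset hP.1)
  exact (Set.Finite.subset t.powerset.powerset.finite_toSet this).to_subtype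

/-- block uniqueness -/
lemma NOP.block_unique {t : Finset ℕ} {P : Finset (Finset ℕ)} (h : NOP t P)
    {B C : Finset ℕ} (hB : B ∈ P) (hC : C ∈ P) {x : ℕ} (hxB : x ∈ B) (hxC : x ∈ C) :
    B = C := by
  by_contra hne
  exact Finset.disjoint_left.1 (h.disj B hB C hC hne) hxB hxC

lemma min'_image_strictMonoOn {α β : Type*} [LinearOrder α] [LinearOrder β]
    {f : α → β} {B : Finset α} (hf : StrictMonoOn f ↑B) (hB : B.Nonempty) :
    (B.image f).min' (hB.image f) = f (B.min' hB) := by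
  apply le_antisymm
  · exact min'_le _ _ (mem_image_of_mem f (B.min'_mem hB))
  · apply le_min'
    intro y hy
    obtain ⟨x, hx, rfl⟩ := mem_image.1 hy
    exact hf.monotoneOn (B.min'_mem hB) hx (B.min'_le x hx)

lemma max'_image_strictMonoOn {α β : Type*} [LinearOrder α] [LinearOrder β]
    {f : α → β} {B : Finset α} (hf : StrictMonoOn f ↑B) (hB : B.Nonempty) :
    (B.image f).max' (hB.image f) = f (B.max' hB) := by
  apply le_antisymm
  · apply max'_le
    intro y hy
    obtain ⟨x, hx, rfl⟩ := mem_image.1 hy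
    exact hf.monotoneOn hx (B.max'_mem hB) (B.le_max' x hx)
  · exact le_max' _ _ (mem_image_of_mem f (B.max'_mem hB))

lemma Ovl.image {f : ℕ → ℕ} {B C t : Finset ℕ} (hf : StrictMonoOn f ↑t)
    (hB : B ⊆ t) (hC : C ⊆ t) (h : Ovl B C) : Ovl (B.image f) (C.image f) := by
  obtain ⟨hBne, hCne, h1, h2, h3⟩ := h
  have hfB : StrictMonoOn f ↑B := hf.mono (by exact_mod_cast hB)
  have hfC : StrictMonoOn f ↑C := hf.mono (by exact_mod_cast hC)
  refine ⟨hBne.image f, hCne.image f, ?_, ?_, ?_⟩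
  · rw [min'_image_strictMonoOn hfB hBne, min'_image_strictMonoOn hfC hCne]
    exact hf (hB (B.min'_mem hBne)) (hC (C.min'_mem hCne)) h1
  · rw [min'_image_strictMonoOn hfC hCne, max'_image_strictMonoOn hfB hBne]
    exact hf (hC (C.min'_mem hCne)) (hB (B.max'_mem hBne)) h2
  · rw [max'_image_strictMonoOn hfB hBne, max'_image_strictMonoOn hfC hCne]
    exact hf (hB (B.max'_mem hBne)) (hC (C.max'_mem hCne)) h3

lemma not_ovl_singleton_left {x : ℕ} {B : Finset ℕ} : ¬ Ovl {x} B := by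
  rintro ⟨h1, h2, ha, hb, hc⟩
  simp only [min'_singleton, max'_singleton] at *
  omega

lemma not_ovl_singleton_right {x : ℕ} {B : Finset ℕ} : ¬ Ovl B {x} := by
  rintro ⟨h1, h2, ha, hb, hc⟩
  simp only [min'_singleton, max'_singleton] at *
  omega


section Relabel

variable {t s : Finset ℕ} {φ ψ : ℕ → ℕ}

/-- Transport a NOP along a strictly monotone bijection of ground sets. -/
lemma NOP.image_relabel (hφ : StrictMonoOn φ ↑t) (hmaps : ∀ x ∈ t, φ x ∈ s)
    (hsurj : ∀ y ∈ s, ∃ x ∈ t, φ x = y) {P : Finset (Finset ℕ)} (h : NOP t P) :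
    NOP s (P.image (Finset.image φ)) := by
  have hinj : Set.InjOn φ ↑t := hφ.injOn
  constructor
  · intro B hB
    obtain ⟨B₀, hB₀, rfl⟩ := mem_image.1 hB
    exact (h.nonempty B₀ hB₀).image φ
  · intro B hB C hC hne
    obtain ⟨B₀, hB₀, rfl⟩ := mem_image.1 hB
    obtain ⟨C₀, hC₀, rfl⟩ := mem_image.1 hC
    have hne₀ : B₀ ≠ C₀ := fun hh => hne (by rw [hh])
    rw [Finset.disjoint_left]
    intro a haB haC
    obtain ⟨b, hb, rfl⟩ := mem_image.1 haB
    obtain ⟨c, hc, hbc⟩ := mem_image.1 haC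
    have : c = b := hinj (by exact_mod_cast h.sub C₀ hC₀ hc) (by exact_mod_cast h.sub B₀ hB₀ hb) hbc
    subst this
    exact Finset.disjoint_left.1 (h.disj B₀ hB₀ C₀ hC₀ hne₀) hb hc
  · intro B hB
    obtain ⟨B₀, hB₀, rfl⟩ := mem_image.1 hB
    intro a haB
    obtain ⟨b, hb, rfl⟩ := mem_image.1 haB
    exact hmaps b (h.sub B₀ hB₀ hb)
  · intro y hy
    obtain ⟨x, hx, rfl⟩ := hsurj y hy
    obtain ⟨B, hB, hxB⟩ := h.cover x hx
    exact ⟨B.image φ, mem_image_of_mem _ hB, mem_image_of_mem _ hxB⟩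
  · intro B hB C hC
    obtain ⟨B₀, hB₀, rfl⟩ := mem_image.1 hB
    obtain ⟨C₀, hC₀, rfl⟩ := mem_image.1 hC
    intro hovl
    -- reflect the overlap back
    obtain ⟨hBne, hCne, h1, h2, h3⟩ := hovl
    have hB0ne : B₀.Nonempty := h.nonempty B₀ hB₀
    have hC0ne : C₀.Nonempty := h.nonempty C₀ hC₀
    have hfB : StrictMonoOn φ ↑B₀ := hφ.mono (by exact_mod_cast h.sub B₀ hB₀)
    have hfC : StrictMonoOn φ ↑C₀ := hφ.mono (by exact_mod_cast h.sub C₀ hC₀)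
    have m1 : (Finset.image φ B₀).min' hBne = φ (B₀.min' hB0ne) :=
      min'_image_strictMonoOn hfB hB0ne
    have m2 : (Finset.image φ B₀).max' hBne = φ (B₀.max' hB0ne) :=
      max'_image_strictMonoOn hfB hB0ne
    have m3 : (Finset.image φ C₀).min' hCne = φ (C₀.min' hC0ne) :=
      min'_image_strictMonoOn hfC hC0ne
    have m4 : (Finset.image φ C₀).max' hCne = φ (C₀.max' hC0ne) :=
      max'_image_strictMonoOn hfC hC0ne
    rw [m1, m3] at h1
    rw [m3, m2] at h2
    rw [m2, m4] at h3
    have e1 := (hφ.lt_iff_lt (h.sub B₀ hB₀ (B₀.min'_mem hB0ne))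
      (h.sub C₀ hC₀ (C₀.min'_mem hC0ne))).1 h1
    have e2 := (hφ.lt_iff_lt (h.sub C₀ hC₀ (C₀.min'_mem hC0ne))
      (h.sub B₀ hB₀ (B₀.max'_mem hB0ne))).1 h2
    have e3 := (hφ.lt_iff_lt (h.sub B₀ hB₀ (B₀.max'_mem hB0ne))
      (h.sub C₀ hC₀ (C₀.max'_mem hC0ne))).1 h3
    exact h.novl B₀ hB₀ C₀ hC₀ ⟨hB0ne, hC0ne, e1, e2, e3⟩

lemma image_image_inv (hψφ : ∀ x ∈ t, ψ (φ x) = x) {P : Finset (Finset ℕ)}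
    (hsub : ∀ B ∈ P, B ⊆ t) :
    (P.image (Finset.image φ)).image (Finset.image ψ) = P := by
  rw [Finset.image_image]
  have : ∀ B ∈ P, (Finset.image ψ ∘ Finset.image φ) B = id B := by
    intro B hB
    simp only [Function.comp_apply, Finset.image_image, id_eq]
    rw [show B.image (ψ ∘ φ) = B.image id from Finset.image_congr
      (fun x hx => by simp [hψφ x (hsub B hB hx)]), Finset.image_id]
  rw [Finset.image_congr this, Finset.image_id]

/-- The relabeling equivalence. -/
noncomputable def relabelEquiv (hφ : StrictMonoOn φ ↑t) (hψ : StrictMonoOn ψ ↑s)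
    (hφm : ∀ x ∈ t, φ x ∈ s) (hψm : ∀ y ∈ s, ψ y ∈ t)
    (hψφ : ∀ x ∈ t, ψ (φ x) = x) (hφψ : ∀ y ∈ s, φ (ψ y) = y) :
    {P // NOP t P} ≃ {P // NOP s P} where
  toFun P := ⟨P.1.image (Finset.image φ),
    P.2.image_relabel hφ hφm (fun y hy => ⟨ψ y, hψm y hy, hφψ y hy⟩)⟩
  invFun P := ⟨P.1.image (Finset.image ψ),
    P.2.image_relabel hψ hψm (fun x hx => ⟨φ x, hφm x hx, hψφ x hx⟩)⟩
  left_inv P := Subtype.ext (image_image_inv hψφ P.2.sub)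
  right_inv P := Subtype.ext (image_image_inv hφψ P.2.sub)

lemma card_image_of_sub (hφ : StrictMonoOn φ ↑t) {B : Finset ℕ} (hB : B ⊆ t) :
    (B.image φ).card = B.card :=
  Finset.card_image_of_injOn (hφ.injOn.mono (by exact_mod_cast hB))

noncomputable def relabelEquiv2 (hφ : StrictMonoOn φ ↑t) (hψ : StrictMonoOn ψ ↑s)
    (hφm : ∀ x ∈ t, φ x ∈ s) (hψm : ∀ y ∈ s, ψ y ∈ t)
    (hψφ : ∀ x ∈ t, ψ (φ x) = x) (hφψ : ∀ y ∈ s, φ (ψ y) = y) :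
    {P // NOP2 t P} ≃ {P // NOP2 s P} where
  toFun P := ⟨P.1.image (Finset.image φ),
    P.2.1.image_relabel hφ hφm (fun y hy => ⟨ψ y, hψm y hy, hφψ y hy⟩), by
      intro B hB
      obtain ⟨B₀, hB₀, rfl⟩ := mem_image.1 hB
      rw [card_image_of_sub hφ (P.2.1.sub B₀ hB₀)]
      exact P.2.2 B₀ hB₀⟩
  invFun P := ⟨P.1.image (Finset.image ψ),
    P.2.1.image_relabel hψ hψm (fun x hx => ⟨φ x, hφm x hx, hψφ x hx⟩), by
      intro B hB
      obtain ⟨B₀, hB₀, rfl⟩ := mem_image.1 hB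
      rw [card_image_of_sub hψ (P.2.1.sub B₀ hB₀)]
      exact P.2.2 B₀ hB₀⟩
  left_inv P := Subtype.ext (image_image_inv hψφ P.2.1.sub)
  right_inv P := Subtype.ext (image_image_inv hφψ P.2.1.sub)

end Relabel

/-- Bessel counts on initial segments of ℕ. -/
noncomputable def bB (k : ℕ) : ℕ := fB (range k)
noncomputable def bBt (k : ℕ) : ℕ := fBt (range k)

section Canonical

variable (t : Finset ℕ)

noncomputable def canφ : ℕ → ℕ := fun x =>
  if h : x ∈ t then ((t.orderIsoOfFin rfl).symm ⟨x, h⟩ : Fin t.card) else 0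

noncomputable def canψ : ℕ → ℕ := fun y =>
  if h : y < t.card then (t.orderIsoOfFin rfl ⟨y, h⟩ : ℕ) else 0

lemma canψ_mem {y : ℕ} (hy : y ∈ range t.card) : canψ t y ∈ t := by
  rw [mem_range] at hy
  simp only [canψ, dif_pos hy]
  exact (t.orderIsoOfFin rfl ⟨y, hy⟩).2

lemma canφ_mem {x : ℕ} (hx : x ∈ t) : canφ t x ∈ range t.card := by
  simp only [canφ, dif_pos hx, mem_range]
  exact ((t.orderIsoOfFin rfl).symm ⟨x, hx⟩).2

lemma canψφ {x : ℕ} (hx : x ∈ t) : canψ t (canφ t x) = x := by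
  simp only [canφ, dif_pos hx, canψ]
  rw [dif_pos (((t.orderIsoOfFin rfl).symm ⟨x, hx⟩).2)]
  simp

lemma canφψ {y : ℕ} (hy : y ∈ range t.card) : canφ t (canψ t y) = y := by
  rw [mem_range] at hy
  simp only [canψ, dif_pos hy, canφ]
  rw [dif_pos (t.orderIsoOfFin rfl ⟨y, hy⟩).2]
  exact congrArg Fin.val ((t.orderIsoOfFin rfl).symm_apply_apply ⟨y, hy⟩)

lemma canφ_mono : StrictMonoOn (canφ t) ↑t := by
  intro a ha b hb hab
  simp only [Finset.mem_coe] at ha hb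
  simp only [canφ, dif_pos ha, dif_pos hb]
  have : (⟨a, ha⟩ : {x // x ∈ t}) < ⟨b, hb⟩ := by exact_mod_cast hab
  exact_mod_cast (t.orderIsoOfFin rfl).symm.strictMono this

lemma canψ_mono : StrictMonoOn (canψ t) ↑(range t.card) := by
  intro a ha b hb hab
  simp only [Finset.mem_coe, Finset.mem_range] at ha hb
  simp only [canψ, dif_pos ha, dif_pos hb]
  have : (⟨a, ha⟩ : Fin t.card) < ⟨b, hb⟩ := by exact_mod_cast hab
  exact_mod_cast (t.orderIsoOfFin rfl).strictMono this

lemma fB_eq_bB : fB t = bB t.card :=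
  Nat.card_congr (relabelEquiv (canφ_mono t) (canψ_mono t) (fun x hx => canφ_mem t hx) (fun y hy => canψ_mem t hy)
    (fun x hx => canψφ t hx) (fun y hy => canφψ t hy))

lemma fBt_eq_bBt : fBt t = bBt t.card :=
  Nat.card_congr (relabelEquiv2 (canφ_mono t) (canψ_mono t) (fun x hx => canφ_mem t hx) (fun y hy => canψ_mem t hy)
    (fun x hx => canψφ t hx) (fun y hy => canφψ t hy))

end Canonical


section StepA

variable {n : ℕ}

lemma valMono : StrictMonoOn (Fin.val : Fin n → ℕ) ↑(univ : Finset (Fin n)) :=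
  fun _ _ _ _ h => h

lemma overlaps_iff {B C : Finset (Fin n)} :
    Ovl (B.image Fin.val) (C.image Fin.val) ↔ Overlaps B C := by
  constructor
  · rintro ⟨hB, hC, h1, h2, h3⟩
    have hB0 : B.Nonempty := by
      obtain ⟨y, hy⟩ := hB; obtain ⟨x, hx, _⟩ := mem_image.1 hy; exact ⟨x, hx⟩
    have hC0 : C.Nonempty := by
      obtain ⟨y, hy⟩ := hC; obtain ⟨x, hx, _⟩ := mem_image.1 hy; exact ⟨x, hx⟩
    have m1 : (B.image Fin.val).min' hB = (B.min' hB0 : ℕ) :=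
      min'_image_strictMonoOn (valMono.mono (by simp)) hB0
    have m2 : (B.image Fin.val).max' hB = (B.max' hB0 : ℕ) :=
      max'_image_strictMonoOn (valMono.mono (by simp)) hB0
    have m3 : (C.image Fin.val).min' hC = (C.min' hC0 : ℕ) :=
      min'_image_strictMonoOn (valMono.mono (by simp)) hC0
    have m4 : (C.image Fin.val).max' hC = (C.max' hC0 : ℕ) :=
      max'_image_strictMonoOn (valMono.mono (by simp)) hC0
    rw [m1, m3] at h1; rw [m3, m2] at h2; rw [m2, m4] at h3
    exact ⟨hB0, hC0, h1, h2, h3⟩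
  · rintro ⟨hB0, hC0, h1, h2, h3⟩
    refine ⟨hB0.image _, hC0.image _, ?_, ?_, ?_⟩
    · rw [min'_image_strictMonoOn (valMono.mono (by simp)) hB0,
        min'_image_strictMonoOn (valMono.mono (by simp)) hC0]
      exact h1
    · rw [min'_image_strictMonoOn (valMono.mono (by simp)) hC0,
        max'_image_strictMonoOn (valMono.mono (by simp)) hB0]
      exact h2
    · rw [max'_image_strictMonoOn (valMono.mono (by simp)) hB0,
        max'_image_strictMonoOn (valMono.mono (by simp)) hC0]
      exact h3

lemma toNOP {π : Finpartition (univ : Finset (Fin n))} (h : IsNonOverlapping π) :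
    NOP (range n) (π.parts.image (Finset.image Fin.val)) := by
  constructor
  · intro B hB
    obtain ⟨B₀, hB₀, rfl⟩ := mem_image.1 hB
    exact (π.nonempty_of_mem_parts hB₀).image _
  · intro B hB C hC hne
    obtain ⟨B₀, hB₀, rfl⟩ := mem_image.1 hB
    obtain ⟨C₀, hC₀, rfl⟩ := mem_image.1 hC
    rw [Finset.disjoint_left]
    intro a haB haC
    obtain ⟨b, hb, rfl⟩ := mem_image.1 haB
    obtain ⟨c, hc, hbc⟩ := mem_image.1 haC
    have : c = b := Fin.val_injective hbc
    subst this
    exact hne (π.eq_of_mem_parts hB₀ hC₀ hb hc ▸ rfl)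
  · intro B hB
    obtain ⟨B₀, hB₀, rfl⟩ := mem_image.1 hB
    intro a haB
    obtain ⟨b, hb, rfl⟩ := mem_image.1 haB
    exact mem_range.2 b.2
  · intro y hy
    obtain ⟨B₀, hB₀, hxB⟩ := π.exists_mem (mem_univ (⟨y, mem_range.1 hy⟩ : Fin n))
    exact ⟨B₀.image Fin.val, mem_image_of_mem _ hB₀, mem_image_of_mem _ hxB⟩
  · intro B hB C hC
    obtain ⟨B₀, hB₀, rfl⟩ := mem_image.1 hB
    obtain ⟨C₀, hC₀, rfl⟩ := mem_image.1 hC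
    rw [overlaps_iff]
    exact h B₀ hB₀ C₀ hC₀

/-- Conversion of a finset of naturals to a finset of `Fin n`, keeping entries below `n`. -/
def toFin (n : ℕ) (B : Finset ℕ) : Finset (Fin n) :=
  (B.filter (· < n)).attachFin (fun _ hm => (mem_filter.1 hm).2)

lemma mem_toFin {i : Fin n} {B : Finset ℕ} : i ∈ toFin n B ↔ (i : ℕ) ∈ B := by
  simp [toFin, Finset.mem_attachFin, mem_filter, i.2]

lemma image_val_toFin {B : Finset ℕ} (hb : ∀ m ∈ B, m < n) :
    (toFin n B).image Fin.val = B := by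
  ext x
  simp only [mem_image]
  constructor
  · rintro ⟨a, ha, rfl⟩; exact mem_toFin.1 ha
  · intro hx; exact ⟨⟨x, hb x hx⟩, mem_toFin.2 hx, rfl⟩

lemma toFin_image_val (B : Finset (Fin n)) : toFin n (B.image Fin.val) = B := by
  ext i
  rw [mem_toFin, mem_image]
  constructor
  · rintro ⟨a, ha, hai⟩
    rwa [show a = i from Fin.val_injective hai] at ha
  · intro hi; exact ⟨i, hi, rfl⟩

/-- Build a Finpartition from a NOP of `range n`. -/
def ofNOP {P : Finset (Finset ℕ)} (h : NOP (range n) P) :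
    Finpartition (univ : Finset (Fin n)) where
  parts := P.image (toFin n)
  supIndep := by
    rw [Finset.supIndep_iff_pairwiseDisjoint]
    intro B hB C hC hne
    simp only [Finset.mem_coe, mem_image] at hB hC
    obtain ⟨B₀, hB₀, rfl⟩ := hB
    obtain ⟨C₀, hC₀, rfl⟩ := hC
    have hne₀ : B₀ ≠ C₀ := by rintro rfl; exact hne rfl
    simp only [id_eq, Finset.disjoint_left]
    intro a ha ha'
    rw [mem_toFin] at ha ha'
    exact Finset.disjoint_left.1 (h.disj B₀ hB₀ C₀ hC₀ hne₀) ha ha'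
  sup_parts := by
    ext i
    simp only [mem_sup, mem_image, mem_univ, iff_true, id_eq]
    obtain ⟨B, hB, hiB⟩ := h.cover i.1 (mem_range.2 i.2)
    exact ⟨toFin n B, ⟨B, hB, rfl⟩, mem_toFin.2 hiB⟩
  bot_notMem := by
    simp only [bot_eq_empty, mem_image]
    rintro ⟨B, hB, hBe⟩
    obtain ⟨x, hx⟩ := h.nonempty B hB
    have : (⟨x, mem_range.1 (h.sub B hB hx)⟩ : Fin n) ∈ toFin n B := mem_toFin.2 hx
    rw [hBe] at this
    exact Finset.notMem_empty _ this

lemma ofNOP_isNonOverlapping {P : Finset (Finset ℕ)} (h : NOP (range n) P) :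
    IsNonOverlapping (ofNOP h) := by
  intro B hB C hC
  simp only [ofNOP, mem_image] at hB hC
  obtain ⟨B₀, hB₀, rfl⟩ := hB
  obtain ⟨C₀, hC₀, rfl⟩ := hC
  rw [← overlaps_iff,
    image_val_toFin (fun m hm => mem_range.1 (h.sub B₀ hB₀ hm)),
    image_val_toFin (fun m hm => mem_range.1 (h.sub C₀ hC₀ hm))]
  exact h.novl B₀ hB₀ C₀ hC₀

lemma ofNOP_leftInv {π : Finpartition (univ : Finset (Fin n))} (h : NOP (range n)
    (π.parts.image (Finset.image Fin.val))) : ofNOP h = π := by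
  apply Finpartition.ext
  ext B
  simp only [ofNOP, mem_image]
  constructor
  · rintro ⟨B₁, hB₁, rfl⟩
    obtain ⟨B₀, hB₀, rfl⟩ := hB₁
    rwa [toFin_image_val]
  · intro hB
    exact ⟨B.image Fin.val, ⟨B, hB, rfl⟩, toFin_image_val _⟩

lemma ofNOP_rightInv {P : Finset (Finset ℕ)} (h : NOP (range n) P) :
    (ofNOP h).parts.image (Finset.image Fin.val) = P := by
  simp only [ofNOP, Finset.image_image]
  ext B
  simp only [mem_image, Function.comp_apply]
  constructor
  · rintro ⟨B₀, hB₀, rfl⟩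
    rwa [image_val_toFin (fun m hm => mem_range.1 (h.sub B₀ hB₀ hm))]
  · intro hB
    exact ⟨B, hB, image_val_toFin (fun m hm => mem_range.1 (h.sub B hB hm))⟩

noncomputable def stepAEquiv (n : ℕ) :
    {π : Finpartition (univ : Finset (Fin n)) // IsNonOverlapping π} ≃
      {P // NOP (range n) P} where
  toFun π := ⟨π.1.parts.image (Finset.image Fin.val), toNOP π.2⟩
  invFun P := ⟨ofNOP P.2, ofNOP_isNonOverlapping P.2⟩
  left_inv π := Subtype.ext (ofNOP_leftInv (toNOP π.2))
  right_inv P := Subtype.ext (ofNOP_rightInv P.2)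

lemma besselB_eq (n : ℕ) : besselB n = bB n := by
  rw [besselB, bB, fB]
  exact Nat.card_congr (stepAEquiv n)

lemma card_toFin {B : Finset ℕ} (hb : ∀ m ∈ B, m < n) : (toFin n B).card = B.card := by
  conv_rhs => rw [← image_val_toFin hb]
  rw [Finset.card_image_of_injective _ Fin.val_injective]

noncomputable def stepAEquiv2 (n : ℕ) :
    {π : Finpartition (univ : Finset (Fin n)) // IsNonOverlapping π ∧
      ∀ β ∈ π.parts, 2 ≤ β.card} ≃ {P // NOP2 (range n) P} where
  toFun π := ⟨π.1.parts.image (Finset.image Fin.val), toNOP π.2.1, by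
    intro B hB
    obtain ⟨B₀, hB₀, rfl⟩ := mem_image.1 hB
    rw [Finset.card_image_of_injective _ Fin.val_injective]
    exact π.2.2 B₀ hB₀⟩
  invFun P := ⟨ofNOP P.2.1, ofNOP_isNonOverlapping P.2.1, by
    intro B hB
    simp only [ofNOP, mem_image] at hB
    obtain ⟨B₀, hB₀, rfl⟩ := hB
    rw [card_toFin (fun m hm => mem_range.1 (P.2.1.sub B₀ hB₀ hm))]
    exact P.2.2 B₀ hB₀⟩
  left_inv π := Subtype.ext (ofNOP_leftInv (toNOP π.2.1))
  right_inv P := Subtype.ext (ofNOP_rightInv P.2.1)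

lemma besselBt_eq (n : ℕ) : besselBt n = bBt n := by
  rw [besselBt, bBt, fBt]
  exact Nat.card_congr (stepAEquiv2 n)

end StepA

section StepC

variable {t : Finset ℕ}

lemma NOP.sup_eq {P : Finset (Finset ℕ)} (h : NOP t P) : P.sup id = t := by
  apply subset_antisymm
  · exact Finset.sup_le (fun B hB => h.sub B hB)
  · intro x hx
    obtain ⟨B, hB, hxB⟩ := h.cover x hx
    exact mem_sup.2 ⟨B, hB, hxB⟩

/-- The non-singleton blocks. -/
def bigs (P : Finset (Finset ℕ)) : Finset (Finset ℕ) := P.filter (fun B => 2 ≤ B.card)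

lemma bigs_subset {P : Finset (Finset ℕ)} : bigs P ⊆ P := filter_subset _ _

lemma bigs_NOP2 {P : Finset (Finset ℕ)} (h : NOP t P) :
    NOP2 ((bigs P).sup id) (bigs P) := by
  refine ⟨⟨fun B hB => h.nonempty B (bigs_subset hB),
    fun B hB C hC => h.disj B (bigs_subset hB) C (bigs_subset hC),
    fun B hB => le_sup (f := id) hB,
    fun x hx => mem_sup.1 hx,
    fun B hB C hC => h.novl B (bigs_subset hB) C (bigs_subset hC)⟩,
    fun B hB => (mem_filter.1 hB).2⟩

/-- Add back the singletons. -/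
lemma addSings_NOP {S : Finset ℕ} {Q : Finset (Finset ℕ)} (hS : S ⊆ t)
    (hQ : NOP2 (t \ S) Q) : NOP t (Q ∪ S.image (fun x => ({x} : Finset ℕ))) := by
  have hQsub : ∀ B ∈ Q, B ⊆ t \ S := hQ.1.sub
  constructor
  · intro B hB
    rcases mem_union.1 hB with hB | hB
    · exact hQ.1.nonempty B hB
    · obtain ⟨x, _, rfl⟩ := mem_image.1 hB
      exact singleton_nonempty x
  · intro B hB C hC hne
    rcases mem_union.1 hB with hB | hB <;> rcases mem_union.1 hC with hC | hC
    · exact hQ.1.disj B hB C hC hne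
    · obtain ⟨x, hx, rfl⟩ := mem_image.1 hC
      rw [Finset.disjoint_singleton_right]
      exact fun hxB => (mem_sdiff.1 (hQsub B hB hxB)).2 hx
    · obtain ⟨x, hx, rfl⟩ := mem_image.1 hB
      rw [Finset.disjoint_singleton_left]
      exact fun hxC => (mem_sdiff.1 (hQsub C hC hxC)).2 hx
    · obtain ⟨x, hx, rfl⟩ := mem_image.1 hB
      obtain ⟨y, hy, rfl⟩ := mem_image.1 hC
      rw [Finset.disjoint_singleton_right, mem_singleton]
      exact fun hxy => hne (by rw [hxy])
  · intro B hB
    rcases mem_union.1 hB with hB | hB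
    · exact (hQsub B hB).trans (sdiff_subset)
    · obtain ⟨x, hx, rfl⟩ := mem_image.1 hB
      exact singleton_subset_iff.2 (hS hx)
  · intro x hx
    by_cases hxS : x ∈ S
    · exact ⟨{x}, mem_union_right _ (mem_image_of_mem _ hxS), mem_singleton_self x⟩
    · obtain ⟨B, hB, hxB⟩ := hQ.1.cover x (mem_sdiff.2 ⟨hx, hxS⟩)
      exact ⟨B, mem_union_left _ hB, hxB⟩
  · intro B hB C hC
    rcases mem_union.1 hB with hB | hB <;> rcases mem_union.1 hC with hC | hC
    · exact hQ.1.novl B hB C hC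
    · obtain ⟨x, _, rfl⟩ := mem_image.1 hC
      exact not_ovl_singleton_right
    · obtain ⟨x, _, rfl⟩ := mem_image.1 hB
      exact not_ovl_singleton_left
    · obtain ⟨x, _, rfl⟩ := mem_image.1 hB
      exact not_ovl_singleton_left

lemma bigs_union_sings {S : Finset ℕ} {Q : Finset (Finset ℕ)}
    (hQ : ∀ B ∈ Q, 2 ≤ B.card) :
    bigs (Q ∪ S.image (fun x => ({x} : Finset ℕ))) = Q := by
  ext B
  simp only [bigs, mem_filter, mem_union, mem_image]
  constructor
  · rintro ⟨hB | ⟨x, _, rfl⟩, hcard⟩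
    · exact hB
    · simp at hcard
  · intro hB
    exact ⟨Or.inl hB, hQ B hB⟩

/-- Reconstruction of a partition from its big blocks and singleton elements. -/
lemma union_bigs_sings {P : Finset (Finset ℕ)} (h : NOP t P) :
    bigs P ∪ (t \ (bigs P).sup id).image (fun x => ({x} : Finset ℕ)) = P := by
  ext B
  simp only [mem_union, mem_image, mem_sdiff, mem_sup]
  constructor
  · rintro (hB | ⟨x, ⟨hxt, hxb⟩, rfl⟩)
    · exact bigs_subset hB
    · -- x is in no big block, so its block is a singleton {x}
      obtain ⟨B, hB, hxB⟩ := h.cover x hxt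
      have hcard : B.card = 1 := by
        rcases Nat.lt_or_ge B.card 2 with hc | hc
        · have := (h.nonempty B hB).card_pos
          omega
        · exact absurd (⟨B, mem_filter.2 ⟨hB, hc⟩, hxB⟩ : ∃ i ∈ bigs P, x ∈ id i) hxb
      obtain ⟨y, hy⟩ := Finset.card_eq_one.1 hcard
      rw [hy] at hxB
      rw [mem_singleton] at hxB
      rwa [hxB, ← hy]
  · intro hB
    rcases Nat.lt_or_ge B.card 2 with hc | hc
    · have hne := h.nonempty B hB
      have hcard : B.card = 1 := by have := hne.card_pos; omega
      obtain ⟨x, hx⟩ := Finset.card_eq_one.1 hcard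
      have hxB : x ∈ B := by rw [hx]; exact mem_singleton_self x
      refine Or.inr ⟨x, ⟨h.sub B hB hxB, ?_⟩, hx.symm⟩
      rintro ⟨C, hC, hxC⟩
      have hCP := bigs_subset hC
      have hBC : B = C := h.block_unique hB hCP hxB hxC
      have h2 := (mem_filter.1 hC).2
      rw [← hBC, hcard] at h2
      omega
    · exact Or.inl (mem_filter.2 ⟨hB, hc⟩)

lemma sigma_pair_ext {F : Finset ℕ → Finset (Finset ℕ) → Prop}
    (x y : Σ S : {S : Finset ℕ // S ∈ t.powerset}, {Q : Finset (Finset ℕ) // F S.1 Q})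
    (h1 : (x.1 : Finset ℕ) = y.1) (h2 : (x.2 : Finset (Finset ℕ)) = y.2.1) : x = y := by
  obtain ⟨⟨S, hS⟩, Q, hQ⟩ := x
  obtain ⟨⟨S', hS'⟩, Q', hQ'⟩ := y
  dsimp at h1 h2
  subst h1
  subst h2
  rfl

noncomputable def stepCEquiv (t : Finset ℕ) :
    {P // NOP t P} ≃ Σ S : {S : Finset ℕ // S ∈ t.powerset}, {Q // NOP2 (t \ S.1) Q} where
  toFun P := ⟨⟨t \ (bigs P.1).sup id, mem_powerset.2 sdiff_subset⟩,
    ⟨bigs P.1, by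
      have hsub : (bigs P.1).sup id ⊆ t := fun x hx => by
        obtain ⟨B, hB, hxB⟩ := mem_sup.1 hx
        exact P.2.sub B (bigs_subset hB) hxB
      rw [Finset.sdiff_sdiff_eq_self hsub]
      exact bigs_NOP2 P.2⟩⟩
  invFun x := ⟨x.2.1 ∪ x.1.1.image (fun y => ({y} : Finset ℕ)),
    addSings_NOP (mem_powerset.1 x.1.2) x.2.2⟩
  left_inv P := Subtype.ext (union_bigs_sings P.2)
  right_inv := by
    rintro ⟨⟨S, hS⟩, Q, hQ⟩
    have hb : bigs (Q ∪ S.image (fun x => ({x} : Finset ℕ))) = Q := bigs_union_sings hQ.2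
    dsimp only
    apply sigma_pair_ext (F := fun S Q => NOP2 (t \ S) Q)
    · dsimp only
      rw [hb, hQ.1.sup_eq, Finset.sdiff_sdiff_eq_self (mem_powerset.1 hS)]
    · dsimp only
      rw [hb]

lemma nat_card_sigma {ι : Type*} [Fintype ι] (F : ι → Type*) [∀ i, Finite (F i)] :
    Nat.card (Σ i, F i) = ∑ i, Nat.card (F i) := by
  letI : ∀ i, Fintype (F i) := fun i => Fintype.ofFinite (F i)
  rw [Nat.card_eq_fintype_card, Fintype.card_sigma]
  exact Finset.sum_congr rfl (fun i _ => (Nat.card_eq_fintype_card).symm)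

lemma fB_eq_sum (t : Finset ℕ) : fB t = ∑ S ∈ t.powerset, fBt (t \ S) := by
  rw [fB, Nat.card_congr (stepCEquiv t), nat_card_sigma]
  rw [← Finset.sum_coe_sort t.powerset (fun S => fBt (t \ S))]
  rfl

lemma bB_eq_sum (n : ℕ) : bB n = ∑ j ∈ range (n + 1), n.choose j * bBt (n - j) := by
  have h1 : bB n = ∑ S ∈ (range n).powerset, bBt (n - S.card) := by
    rw [bB, fB_eq_sum]
    refine Finset.sum_congr rfl (fun S hS => ?_)
    rw [fBt_eq_bBt, card_sdiff_of_subset (mem_powerset.1 hS), card_range]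
  rw [h1, sum_powerset_apply_card (fun k => bBt (n - k)), card_range]
  simp only [smul_eq_mul]

end StepC

section StepD

variable {n : ℕ}

lemma min'_gt_of_Ioo {a b : ℕ} {B : Finset ℕ} (hsub : B ⊆ Ioo a b) (hB : B.Nonempty) :
    a < B.min' hB := (Finset.mem_Ioo.1 (hsub (B.min'_mem hB))).1

lemma max'_lt_of_Ioo {a b : ℕ} {B : Finset ℕ} (hsub : B ⊆ Ioo a b) (hB : B.Nonempty) :
    B.max' hB < b := (Finset.mem_Ioo.1 (hsub (B.max'_mem hB))).2

variable {P : Finset (Finset ℕ)}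

lemma exu (h : NOP2 (range (n + 1)) P) : ∃! B, B ∈ P ∧ 0 ∈ B := by
  obtain ⟨B, hB, h0⟩ := h.1.cover 0 (by simp)
  exact ⟨B, ⟨hB, h0⟩, fun C hC => h.1.block_unique hC.1 hB hC.2 h0⟩

/-- The block containing `0`. -/
noncomputable def alphaOf (h : NOP2 (range (n + 1)) P) : Finset ℕ :=
  P.choose (fun B => 0 ∈ B) (exu h)

lemma alpha_mem (h : NOP2 (range (n + 1)) P) : alphaOf h ∈ P := P.choose_mem _ _

lemma alpha_zero (h : NOP2 (range (n + 1)) P) : 0 ∈ alphaOf h := by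
  unfold alphaOf
  exact P.choose_property (fun B => 0 ∈ B) (exu h)

lemma alpha_ne (h : NOP2 (range (n + 1)) P) : (alphaOf h).Nonempty := ⟨0, alpha_zero h⟩

/-- The max of the block containing `0`. -/
noncomputable def mOf (h : NOP2 (range (n + 1)) P) : ℕ := (alphaOf h).max' (alpha_ne h)

lemma alpha_min (h : NOP2 (range (n + 1)) P) : (alphaOf h).min' (alpha_ne h) = 0 :=
  Nat.le_zero.1 (min'_le _ 0 (alpha_zero h))

lemma mOf_mem (h : NOP2 (range (n + 1)) P) : mOf h ∈ Finset.Icc 1 n := by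
  rw [mem_Icc]
  constructor
  · obtain ⟨a, ha, b, hb, hab⟩ := Finset.one_lt_card.1 (h.2 _ (alpha_mem h))
    rcases Nat.eq_zero_or_pos a with rfl | hpa
    · have := le_max' _ b hb
      have : 0 < b := Nat.pos_of_ne_zero (fun hh => hab (by omega))
      have := le_max' (alphaOf h) b hb
      exact le_trans (by omega) this
    · exact le_trans hpa (le_max' _ a ha)
  · have := h.1.sub _ (alpha_mem h) ((alphaOf h).max'_mem (alpha_ne h))
    rw [mem_range] at this
    unfold mOf
    omega

/-- Every block other than `α` lies entirely below or above `m`. -/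
lemma side (h : NOP2 (range (n + 1)) P) {B : Finset ℕ} (hB : B ∈ P)
    (hne : B ≠ alphaOf h) : B ⊆ Ioo 0 (mOf h) ∨ B ⊆ Ioo (mOf h) (n + 1) := by
  have hBne := h.1.nonempty B hB
  have hdisj := h.1.disj B hB _ (alpha_mem h) hne
  have h0B : 0 ∉ B := fun hh => Finset.disjoint_left.1 hdisj hh (alpha_zero h)
  have hmB : mOf h ∉ B := fun hh =>
    Finset.disjoint_left.1 hdisj hh ((alphaOf h).max'_mem (alpha_ne h))
  have hmin : 0 < B.min' hBne := by
    have := B.min'_mem hBne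
    rcases Nat.eq_zero_or_pos (B.min' hBne) with hz | hp
    · rw [hz] at this; exact absurd this h0B
    · exact hp
  rcases Nat.lt_trichotomy (B.min' hBne) (mOf h) with hlt | heq | hgt
  · left
    have hmax : B.max' hBne < mOf h := by
      by_contra hge
      push_neg at hge
      have hne' : B.max' hBne ≠ mOf h := fun hh => hmB (hh ▸ B.max'_mem hBne)
      have hgt' : mOf h < B.max' hBne := lt_of_le_of_ne hge (Ne.symm hne')
      exact h.1.novl _ (alpha_mem h) B hB
        ⟨alpha_ne h, hBne, by rw [alpha_min h]; exact hmin, hlt, hgt'⟩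
    intro x hx
    rw [Finset.mem_Ioo]
    have := B.min'_le x hx
    have := B.le_max' x hx
    omega
  · exact absurd (heq ▸ B.min'_mem hBne) hmB
  · right
    intro x hx
    rw [Finset.mem_Ioo]
    have := B.min'_le x hx
    have hxr := h.1.sub B hB hx
    rw [mem_range] at hxr
    omega

/-- the inner singleton elements of `P`: elements of `α` strictly between `0` and `m`. -/
noncomputable def sOf (h : NOP2 (range (n + 1)) P) : Finset ℕ :=
  ((alphaOf h).erase 0).erase (mOf h)

lemma sOf_sub (h : NOP2 (range (n + 1)) P) : sOf h ⊆ Ioo 0 (mOf h) := by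
  intro x hx
  simp only [sOf, mem_erase] at hx
  obtain ⟨hxm, hx0, hxα⟩ := hx
  rw [Finset.mem_Ioo]
  have h1 := le_max' (alphaOf h) x hxα
  constructor
  · omega
  · exact lt_of_le_of_ne h1 hxm

lemma mem_sOf {x : ℕ} (h : NOP2 (range (n + 1)) P) :
    x ∈ sOf h ↔ x ∈ alphaOf h ∧ x ≠ 0 ∧ x ≠ mOf h := by
  simp only [sOf, mem_erase]
  tauto

/-- the inner big blocks. -/
noncomputable def qbigOf (h : NOP2 (range (n + 1)) P) : Finset (Finset ℕ) :=
  P.filter (· ⊆ Ioo 0 (mOf h))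

lemma alpha_not_inner (h : NOP2 (range (n + 1)) P) : ¬ alphaOf h ⊆ Ioo 0 (mOf h) :=
  fun hh => by simpa using Finset.mem_Ioo.1 (hh (alpha_zero h))

lemma qbigOf_NOP2 (h : NOP2 (range (n + 1)) P) :
    NOP2 (Ioo 0 (mOf h) \ sOf h) (qbigOf h) := by
  have hsub : qbigOf h ⊆ P := filter_subset _ _
  refine ⟨⟨fun B hB => h.1.nonempty B (hsub hB),
    fun B hB C hC => h.1.disj B (hsub hB) C (hsub hC), ?_, ?_,
    fun B hB C hC => h.1.novl B (hsub hB) C (hsub hC)⟩,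
    fun B hB => h.2 B (hsub hB)⟩
  · intro B hB x hx
    have hBP := mem_filter.1 hB
    have hBa : B ≠ alphaOf h := fun hh => alpha_not_inner h (hh ▸ hBP.2)
    rw [mem_sdiff]
    refine ⟨hBP.2 hx, fun hxs => ?_⟩
    have := (mem_sOf h).1 hxs
    exact Finset.disjoint_left.1 (h.1.disj B hBP.1 _ (alpha_mem h) hBa) hx this.1
  · intro x hx
    rw [mem_sdiff, Finset.mem_Ioo] at hx
    obtain ⟨⟨hx0, hxm⟩, hxs⟩ := hx
    have hmn := (mem_Icc.1 (mOf_mem h)).2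
    obtain ⟨B, hB, hxB⟩ := h.1.cover x (mem_range.2 (by omega))
    have hBa : B ≠ alphaOf h := by
      rintro rfl
      exact hxs ((mem_sOf h).2 ⟨hxB, by omega, by omega⟩)
    rcases side h hB hBa with hs | hs
    · exact ⟨B, mem_filter.2 ⟨hB, hs⟩, hxB⟩
    · have := Finset.mem_Ioo.1 (hs hxB)
      omega

noncomputable def qOf (h : NOP2 (range (n + 1)) P) : Finset (Finset ℕ) :=
  qbigOf h ∪ (sOf h).image (fun x => ({x} : Finset ℕ))

lemma qOf_NOP (h : NOP2 (range (n + 1)) P) : NOP (Ioo 0 (mOf h)) (qOf h) :=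
  addSings_NOP (sOf_sub h) (qbigOf_NOP2 h)

noncomputable def rOf (h : NOP2 (range (n + 1)) P) : Finset (Finset ℕ) :=
  P.filter (· ⊆ Ioo (mOf h) (n + 1))

lemma rOf_NOP2 (h : NOP2 (range (n + 1)) P) : NOP2 (Ioo (mOf h) (n + 1)) (rOf h) := by
  have hsub : rOf h ⊆ P := filter_subset _ _
  refine ⟨⟨fun B hB => h.1.nonempty B (hsub hB),
    fun B hB C hC => h.1.disj B (hsub hB) C (hsub hC),
    fun B hB => (mem_filter.1 hB).2, ?_,
    fun B hB C hC => h.1.novl B (hsub hB) C (hsub hC)⟩,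
    fun B hB => h.2 B (hsub hB)⟩
  intro x hx
  rw [Finset.mem_Ioo] at hx
  obtain ⟨B, hB, hxB⟩ := h.1.cover x (mem_range.2 hx.2)
  have hBa : B ≠ alphaOf h := by
    rintro rfl
    have h1 : x ≤ mOf h := le_max' _ x hxB
    omega
  rcases side h hB hBa with hs | hs
  · have := Finset.mem_Ioo.1 (hs hxB)
    omega
  · exact ⟨B, mem_filter.2 ⟨hB, hs⟩, hxB⟩

end StepD

section StepDBuild

variable {n m : ℕ} {Q R : Finset (Finset ℕ)}

/-- singleton elements for the rebuilt `α`. -/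
def sgOf (m : ℕ) (Q : Finset (Finset ℕ)) : Finset ℕ := Ioo 0 m \ (bigs Q).sup id

/-- the rebuilt block containing 0. -/
def alphaB (m : ℕ) (Q : Finset (Finset ℕ)) : Finset ℕ := insert 0 (insert m (sgOf m Q))

def buildP (m : ℕ) (Q R : Finset (Finset ℕ)) : Finset (Finset ℕ) :=
  insert (alphaB m Q) (bigs Q ∪ R)

lemma mem_alphaB {x : ℕ} : x ∈ alphaB m Q ↔ x = 0 ∨ x = m ∨ x ∈ sgOf m Q := by
  simp [alphaB]

lemma zero_mem_alphaB : 0 ∈ alphaB m Q := mem_alphaB.2 (Or.inl rfl)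

lemma m_mem_alphaB : m ∈ alphaB m Q := mem_alphaB.2 (Or.inr (Or.inl rfl))

lemma alphaB_le {x : ℕ} (hx : x ∈ alphaB m Q) : x ≤ m := by
  rcases mem_alphaB.1 hx with rfl | rfl | hx
  · omega
  · exact le_refl _
  · have := Finset.mem_Ioo.1 (mem_sdiff.1 hx).1
    omega

lemma sgOf_mem {x : ℕ} (hx : x ∈ sgOf m Q) : 0 < x ∧ x < m :=
  Finset.mem_Ioo.1 (mem_sdiff.1 hx).1

lemma alphaB_max (hne : (alphaB m Q).Nonempty) : (alphaB m Q).max' hne = m :=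
  le_antisymm (max'_le _ _ _ (fun x hx => alphaB_le hx)) (le_max' _ _ m_mem_alphaB)

lemma alphaB_min (hne : (alphaB m Q).Nonempty) : (alphaB m Q).min' hne = 0 :=
  Nat.le_zero.1 (min'_le _ 0 zero_mem_alphaB)

lemma bigs_sup_sub (hQ : NOP (Ioo 0 m) Q) : (bigs Q).sup id ⊆ Ioo 0 m := by
  intro x hx
  obtain ⟨B, hB, hxB⟩ := mem_sup.1 hx
  exact hQ.sub B (bigs_subset hB) hxB

lemma bigs_NOP2' (hQ : NOP (Ioo 0 m) Q) : NOP2 (Ioo 0 m \ sgOf m Q) (bigs Q) := by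
  unfold sgOf
  rw [Finset.sdiff_sdiff_eq_self (bigs_sup_sub hQ)]
  exact bigs_NOP2 hQ

lemma bigs_block_sub (hQ : NOP (Ioo 0 m) Q) {B : Finset ℕ} (hB : B ∈ bigs Q) :
    B ⊆ Ioo 0 m := hQ.sub B (bigs_subset hB)

lemma disj_alphaB_bigs (hQ : NOP (Ioo 0 m) Q) {B : Finset ℕ} (hB : B ∈ bigs Q) :
    Disjoint (alphaB m Q) B := by
  rw [Finset.disjoint_left]
  intro x hxα hxB
  have hIoo := Finset.mem_Ioo.1 (bigs_block_sub hQ hB hxB)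
  rcases mem_alphaB.1 hxα with rfl | rfl | hx
  · omega
  · omega
  · exact (mem_sdiff.1 hx).2 (mem_sup.2 ⟨B, hB, hxB⟩)

lemma disj_alphaB_R (hR : NOP2 (Ioo m (n + 1)) R) {C : Finset ℕ} (hC : C ∈ R) :
    Disjoint (alphaB m Q) C := by
  rw [Finset.disjoint_left]
  intro x hxα hxC
  have hIoo := Finset.mem_Ioo.1 (hR.1.sub C hC hxC)
  have := alphaB_le hxα
  omega

lemma disj_bigs_R (hQ : NOP (Ioo 0 m) Q) (hR : NOP2 (Ioo m (n + 1)) R)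
    {B C : Finset ℕ} (hB : B ∈ bigs Q) (hC : C ∈ R) : Disjoint B C := by
  rw [Finset.disjoint_left]
  intro x hxB hxC
  have h1 := Finset.mem_Ioo.1 (bigs_block_sub hQ hB hxB)
  have h2 := Finset.mem_Ioo.1 (hR.1.sub C hC hxC)
  omega

lemma buildP_NOP2 (hm : m ∈ Finset.Icc 1 n) (hQ : NOP (Ioo 0 m) Q)
    (hR : NOP2 (Ioo m (n + 1)) R) : NOP2 (range (n + 1)) (buildP m Q R) := by
  rw [mem_Icc] at hm
  constructor
  constructor
  · -- nonempty
    intro B hB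
    rcases mem_insert.1 hB with rfl | hB
    · exact ⟨0, zero_mem_alphaB⟩
    · rcases mem_union.1 hB with hB | hB
      · exact hQ.nonempty B (bigs_subset hB)
      · exact hR.1.nonempty B hB
  · -- disjoint
    intro B hB C hC hne
    rcases mem_insert.1 hB with rfl | hB <;> rcases mem_insert.1 hC with h' | hC
    · exact absurd h'.symm hne
    · rcases mem_union.1 hC with hC | hC
      · exact disj_alphaB_bigs hQ hC
      · exact disj_alphaB_R hR hC
    · subst h'
      rcases mem_union.1 hB with hB | hB
      · exact (disj_alphaB_bigs hQ hB).symm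
      · exact (disj_alphaB_R hR hB).symm
    · rcases mem_union.1 hB with hB | hB <;> rcases mem_union.1 hC with hC | hC
      · exact hQ.disj B (bigs_subset hB) C (bigs_subset hC) hne
      · exact disj_bigs_R hQ hR hB hC
      · exact (disj_bigs_R hQ hR hC hB).symm
      · exact hR.1.disj B hB C hC hne
  · -- sub
    intro B hB x hx
    rw [mem_range]
    rcases mem_insert.1 hB with rfl | hB
    · have := alphaB_le hx
      omega
    · rcases mem_union.1 hB with hB | hB
      · have := Finset.mem_Ioo.1 (bigs_block_sub hQ hB hx)
        omega
      · have := Finset.mem_Ioo.1 (hR.1.sub B hB hx)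
        omega
  · -- cover
    intro x hx
    rw [mem_range] at hx
    by_cases hx0 : x = 0
    · exact ⟨alphaB m Q, mem_insert_self _ _, hx0 ▸ zero_mem_alphaB⟩
    by_cases hxm : x = m
    · exact ⟨alphaB m Q, mem_insert_self _ _, hxm ▸ m_mem_alphaB⟩
    by_cases hlt : x < m
    · by_cases hsg : x ∈ sgOf m Q
      · exact ⟨alphaB m Q, mem_insert_self _ _, mem_alphaB.2 (Or.inr (Or.inr hsg))⟩
      · have hx' : x ∈ Ioo 0 m \ sgOf m Q := by
          rw [mem_sdiff, Finset.mem_Ioo]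
          exact ⟨⟨Nat.pos_of_ne_zero hx0, hlt⟩, hsg⟩
        obtain ⟨B, hB, hxB⟩ := (bigs_NOP2' hQ).1.cover x hx'
        exact ⟨B, mem_insert_of_mem (mem_union_left _ hB), hxB⟩
    · have hx' : x ∈ Ioo m (n + 1) := Finset.mem_Ioo.2 ⟨by omega, by omega⟩
      obtain ⟨B, hB, hxB⟩ := hR.1.cover x hx'
      exact ⟨B, mem_insert_of_mem (mem_union_right _ hB), hxB⟩
  · -- non-overlap
    intro B hB C hC hovl
    obtain ⟨hBne, hCne, h1, h2, h3⟩ := hovl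
    rcases mem_insert.1 hB with rfl | hB
    · have e1 := alphaB_min hBne
      have e2 := alphaB_max hBne
      rcases mem_insert.1 hC with h' | hC
      · subst h'
        have e3 := alphaB_min hCne
        have e4 := alphaB_max hCne
        omega
      · rcases mem_union.1 hC with hC | hC
        · have b1 := max'_lt_of_Ioo (bigs_block_sub hQ hC) hCne
          omega
        · have b1 := min'_gt_of_Ioo (hR.1.sub C hC) hCne
          omega
    · rcases mem_union.1 hB with hB | hB
      · have b1 := min'_gt_of_Ioo (bigs_block_sub hQ hB) hBne
        have b2 := max'_lt_of_Ioo (bigs_block_sub hQ hB) hBne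
        rcases mem_insert.1 hC with h' | hC
        · subst h'
          have e1 := alphaB_min hCne
          omega
        · rcases mem_union.1 hC with hC | hC
          · exact hQ.novl B (bigs_subset hB) C (bigs_subset hC) ⟨hBne, hCne, h1, h2, h3⟩
          · have c1 := min'_gt_of_Ioo (hR.1.sub C hC) hCne
            omega
      · have b1 := min'_gt_of_Ioo (hR.1.sub B hB) hBne
        have b2 := max'_lt_of_Ioo (hR.1.sub B hB) hBne
        rcases mem_insert.1 hC with h' | hC
        · subst h'
          have e1 := alphaB_min hCne
          omega
        · rcases mem_union.1 hC with hC | hC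
          · have c1 := max'_lt_of_Ioo (bigs_block_sub hQ hC) hCne
            omega
          · exact hR.1.novl B hB C hC ⟨hBne, hCne, h1, h2, h3⟩
  · -- cards
    intro B hB
    rcases mem_insert.1 hB with rfl | hB
    · exact Finset.one_lt_card.2 ⟨0, zero_mem_alphaB, m, m_mem_alphaB, by omega⟩
    · rcases mem_union.1 hB with hB | hB
      · exact (mem_filter.1 hB).2
      · exact hR.2 B hB

end StepDBuild

section StepDRound

variable {n m : ℕ} {P Q R : Finset (Finset ℕ)}

lemma mem_qbigOf {B : Finset ℕ} (h : NOP2 (range (n + 1)) P) :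
    B ∈ qbigOf h ↔ B ∈ P ∧ B ⊆ Ioo 0 (mOf h) := by
  unfold qbigOf; exact mem_filter

lemma mem_rOf {B : Finset ℕ} (h : NOP2 (range (n + 1)) P) :
    B ∈ rOf h ↔ B ∈ P ∧ B ⊆ Ioo (mOf h) (n + 1) := by
  unfold rOf; exact mem_filter

lemma buildP_round (h : NOP2 (range (n + 1)) P) :
    buildP (mOf h) (qOf h) (rOf h) = P := by
  have hb : bigs (qOf h) = qbigOf h := bigs_union_sings (qbigOf_NOP2 h).2
  have hsup : (qbigOf h).sup id = Ioo 0 (mOf h) \ sOf h := (qbigOf_NOP2 h).1.sup_eq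
  have hsg : sgOf (mOf h) (qOf h) = sOf h := by
    unfold sgOf
    rw [hb, hsup, Finset.sdiff_sdiff_eq_self (sOf_sub h)]
  have hα : alphaB (mOf h) (qOf h) = alphaOf h := by
    ext x
    rw [mem_alphaB, hsg, mem_sOf]
    constructor
    · rintro (rfl | rfl | hx)
      · exact alpha_zero h
      · exact (alphaOf h).max'_mem (alpha_ne h)
      · exact hx.1
    · intro hx
      by_cases h0 : x = 0
      · exact Or.inl h0
      by_cases hm : x = mOf h
      · exact Or.inr (Or.inl hm)
      · exact Or.inr (Or.inr ⟨hx, h0, hm⟩)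
  ext B
  unfold buildP
  rw [hα, hb]
  simp only [mem_insert, mem_union]
  constructor
  · rintro (rfl | hB | hB)
    · exact alpha_mem h
    · exact ((mem_qbigOf h).1 hB).1
    · exact ((mem_rOf h).1 hB).1
  · intro hB
    by_cases hBa : B = alphaOf h
    · exact Or.inl hBa
    · rcases side h hB hBa with hs | hs
      · exact Or.inr (Or.inl ((mem_qbigOf h).2 ⟨hB, hs⟩))
      · exact Or.inr (Or.inr ((mem_rOf h).2 ⟨hB, hs⟩))

variable (hm : m ∈ Finset.Icc 1 n) (hQ : NOP (Ioo 0 m) Q) (hR : NOP2 (Ioo m (n + 1)) R)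

lemma alphaOf_build (h' : NOP2 (range (n + 1)) (buildP m Q R)) :
    alphaOf h' = alphaB m Q :=
  h'.1.block_unique (alpha_mem h') (mem_insert_self _ _) (alpha_zero h') zero_mem_alphaB

lemma mOf_build (h' : NOP2 (range (n + 1)) (buildP m Q R)) : mOf h' = m := by
  have ha := alphaOf_build (m := m) (Q := Q) (R := R) h'
  have hmem : m ∈ alphaOf h' := by rw [ha]; exact m_mem_alphaB
  have hle : ∀ x ∈ alphaOf h', x ≤ m := fun x hx => alphaB_le (by rwa [ha] at hx)
  exact le_antisymm (max'_le _ _ _ hle) (le_max' _ _ hmem)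

include hQ hR in
lemma qbigOf_build (h' : NOP2 (range (n + 1)) (buildP m Q R)) :
    qbigOf h' = bigs Q := by
  have hb := mOf_build (m := m) (Q := Q) (R := R) h'
  ext B
  rw [mem_qbigOf, hb]
  constructor
  · rintro ⟨hBP, hBsub⟩
    rcases mem_insert.1 hBP with rfl | hBP
    · have := Finset.mem_Ioo.1 (hBsub zero_mem_alphaB)
      omega
    · rcases mem_union.1 hBP with hBP | hBP
      · exact hBP
      · have hne := hR.1.nonempty B hBP
        have h1 := Finset.mem_Ioo.1 (hR.1.sub B hBP (B.min'_mem hne))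
        have h2 := Finset.mem_Ioo.1 (hBsub (B.min'_mem hne))
        omega
  · intro hB
    exact ⟨mem_insert_of_mem (mem_union_left _ hB), bigs_block_sub hQ hB⟩

include hQ hR in
lemma rOf_build (h' : NOP2 (range (n + 1)) (buildP m Q R)) : rOf h' = R := by
  have hb := mOf_build (m := m) (Q := Q) (R := R) h'
  ext B
  rw [mem_rOf, hb]
  constructor
  · rintro ⟨hBP, hBsub⟩
    rcases mem_insert.1 hBP with rfl | hBP
    · have := Finset.mem_Ioo.1 (hBsub zero_mem_alphaB)
      omega
    · rcases mem_union.1 hBP with hBP | hBP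
      · have hne := hQ.nonempty B (bigs_subset hBP)
        have h1 := Finset.mem_Ioo.1 (bigs_block_sub hQ hBP (B.min'_mem hne))
        have h2 := Finset.mem_Ioo.1 (hBsub (B.min'_mem hne))
        omega
      · exact hBP
  · intro hB
    exact ⟨mem_insert_of_mem (mem_union_right _ hB), hR.1.sub B hB⟩

include hQ hR in
lemma sOf_build (h' : NOP2 (range (n + 1)) (buildP m Q R)) : sOf h' = sgOf m Q := by
  have ha := alphaOf_build (m := m) (Q := Q) (R := R) h'
  have hb := mOf_build (m := m) (Q := Q) (R := R) h'
  ext x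
  rw [mem_sOf, ha, mem_alphaB, hb]
  constructor
  · rintro ⟨rfl | rfl | hsg, hx0, hxm⟩
    · exact absurd rfl hx0
    · exact absurd rfl hxm
    · exact hsg
  · intro hsg
    have := sgOf_mem hsg
    exact ⟨Or.inr (Or.inr hsg), by omega, by omega⟩

include hQ hR in
lemma qOf_build (h' : NOP2 (range (n + 1)) (buildP m Q R)) : qOf h' = Q := by
  unfold qOf
  rw [qbigOf_build hQ hR h', sOf_build hQ hR h']
  exact union_bigs_sings hQ

end StepDRound

section StepDEquiv

variable {n : ℕ}

lemma sigmaD_ext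
    (x y : Σ m : {m : ℕ // m ∈ Finset.Icc 1 n},
      {Q // NOP (Ioo 0 m.1) Q} × {R // NOP2 (Ioo m.1 (n + 1)) R})
    (h1 : x.1.1 = y.1.1) (h2 : x.2.1.1 = y.2.1.1) (h3 : x.2.2.1 = y.2.2.1) : x = y := by
  obtain ⟨⟨m, hm⟩, ⟨Q, hQ⟩, ⟨R, hR⟩⟩ := x
  obtain ⟨⟨m', hm'⟩, ⟨Q', hQ'⟩, ⟨R', hR'⟩⟩ := y
  dsimp at h1 h2 h3
  subst h1; subst h2; subst h3
  rfl

noncomputable def stepDEquiv (n : ℕ) :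
    {P // NOP2 (range (n + 1)) P} ≃
      Σ m : {m : ℕ // m ∈ Finset.Icc 1 n},
        {Q // NOP (Ioo 0 m.1) Q} × {R // NOP2 (Ioo m.1 (n + 1)) R} where
  toFun P := ⟨⟨mOf P.2, mOf_mem P.2⟩, ⟨qOf P.2, qOf_NOP P.2⟩, ⟨rOf P.2, rOf_NOP2 P.2⟩⟩
  invFun x := ⟨buildP x.1.1 x.2.1.1 x.2.2.1, buildP_NOP2 x.1.2 x.2.1.2 x.2.2.2⟩
  left_inv P := Subtype.ext (buildP_round P.2)
  right_inv := by
    rintro ⟨⟨m, hm⟩, ⟨Q, hQ⟩, ⟨R, hR⟩⟩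
    dsimp only
    apply sigmaD_ext
    · exact mOf_build _
    · exact qOf_build hQ hR _
    · exact rOf_build hQ hR _

lemma bBt_succ (n : ℕ) :
    bBt (n + 1) = ∑ j ∈ Finset.range n, bBt j * bB (n - 1 - j) := by
  have h1 : bBt (n + 1) =
      ∑ m ∈ Finset.Icc 1 n, fB (Ioo 0 m) * fBt (Ioo m (n + 1)) := by
    rw [bBt, fBt, Nat.card_congr (stepDEquiv n), nat_card_sigma]
    rw [← Finset.sum_coe_sort (Finset.Icc 1 n)
      (fun m => fB (Ioo 0 m) * fBt (Ioo m (n + 1)))]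
    refine Finset.sum_congr rfl (fun m _ => ?_)
    rw [Nat.card_prod]
    rfl
  rw [h1]
  have h2 : ∀ m ∈ Finset.Icc 1 n,
      fB (Ioo 0 m) * fBt (Ioo m (n + 1)) = bB (m - 1) * bBt (n - m) := by
    intro m hm
    rw [mem_Icc] at hm
    rw [fB_eq_bB, fBt_eq_bBt, Nat.card_Ioo, Nat.card_Ioo]
    congr 2
    omega
  rw [Finset.sum_congr rfl h2]
  refine Finset.sum_nbij' (fun m => n - m) (fun j => n - j) ?_ ?_ ?_ ?_ ?_
  · intro m hm
    rw [mem_Icc] at hm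
    rw [mem_range]
    omega
  · intro j hj
    rw [mem_range] at hj
    rw [mem_Icc]
    omega
  · intro m hm
    rw [mem_Icc] at hm
    omega
  · intro j hj
    rw [mem_range] at hj
    omega
  · intro m hm
    rw [mem_Icc] at hm
    have e1 : n - 1 - (n - m) = m - 1 := by omega
    rw [e1, mul_comm]

end StepDEquiv
end BesselAux

theorem bessel_number_recurrences (n : ℕ) :
    besselB n = (∑ j ∈ Finset.range (n + 1), n.choose j * besselBt (n - j)) ∧
    besselBt (n + 1) = ∑ j ∈ Finset.range n, besselBt j * besselB (n - 1 - j) := by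
  constructor
  · rw [BesselAux.besselB_eq, BesselAux.bB_eq_sum]
    exact Finset.sum_congr rfl (fun j _ => by rw [BesselAux.besselBt_eq])
  · rw [BesselAux.besselBt_eq, BesselAux.bBt_succ]
    exact Finset.sum_congr rfl (fun j _ => by
      rw [BesselAux.besselBt_eq, BesselAux.besselB_eq])
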